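/- Being properly spaced persists under duplications: if k ≥ 2, x ∈ Z_q^k is properly spaced in y, and y' is any descendant of y under reverse-complement duplications of length k, then x is properly spaced in y'. -/

import Mathlib

/-- One reverse-complement duplication of length `k`: a `k`-factor `v` of `x`
gets a reverse-complement copy inserted right after it. -/
def RCStep {q : ℕ} (bar : ZMod q → ZMod q) (k : ℕ) (x y : List (ZMod q)) : Prop :=
  ∃ u v w : List (ZMod q), v.length = k ∧ x = u ++ v ++ w ∧
    y = u ++ v ++ (v.map bar).reverse ++ w

/-- Finitely many (possibly zero) reverse-complement duplications of length `k`. -/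
def RCDerives {q : ℕ} (bar : ZMod q → ZMod q) (k : ℕ) :
    List (ZMod q) → List (ZMod q) → Prop :=
  Relation.ReflTransGen (RCStep bar k)

/-- Interleave gap strings with the letters of `x`:
`interleave [g0,…,gk] [x0,…,x_{k-1}] = g0 ++ x0 :: g1 ++ x1 :: ⋯ x_{k-1} :: gk`. -/
def interleave {α : Type*} : List (List α) → List α → List α
  | [], _ => []
  | g :: _, [] => g
  | g :: gs, a :: as => g ++ a :: interleave gs as

/-- `x ∈ Z_q^k` is properly spaced in `y`: `x` is a subsequence of `y` via a gap
decomposition `y = y⁽⁰⁾x₀y⁽¹⁾⋯x_{k-1}y⁽ᵏ⁾`, and when `k` is even all of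
`|y⁽¹⁾|,…,|y⁽ᵏ⁾|` are even. -/
def ProperlySpaced {α : Type*} (k : ℕ) (x y : List α) : Prop :=
  x.length = k ∧ ∃ gaps : List (List α), gaps.length = k + 1 ∧
    y = interleave gaps x ∧ (k % 2 = 0 → ∀ g ∈ gaps.tail, g.length % 2 = 0)

lemma forall2_mem {α β : Type*} {R : α → β → Prop} :
    ∀ {l : List α} {l' : List β}, List.Forall₂ R l l' → ∀ b ∈ l', ∃ a ∈ l, R a b := by
  intro l l' h
  induction h with
  | nil => intro b hb; simp at hb
  | cons hr _ ih =>
    intro b hb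
    rcases List.mem_cons.mp hb with hb | hb
    · exact ⟨_, List.mem_cons_self, hb ▸ hr⟩
    · obtain ⟨a, ha, har⟩ := ih b hb
      exact ⟨a, List.mem_cons_of_mem _ ha, har⟩

lemma insert_interleave {α : Type*} (ins : List α) :
    ∀ (x : List α) (gaps : List (List α)) (A B : List α),
      gaps.length = x.length + 1 → interleave gaps x = A ++ B →
      ∃ gaps' : List (List α), gaps'.length = gaps.length ∧
        interleave gaps' x = A ++ ins ++ B ∧
        List.Forall₂ (fun g g' : List α =>
          g'.length = g.length ∨ g'.length = g.length + ins.length) gaps gaps' := by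
  intro x
  induction x with
  | nil =>
    intro gaps A B hlen heq
    match gaps, hlen with
    | [g], _ =>
      refine ⟨[A ++ ins ++ B], rfl, rfl, ?_⟩
      refine List.Forall₂.cons ?_ List.Forall₂.nil
      right
      simp only [interleave] at heq
      simp [heq, List.length_append]
      ring
  | cons a as ih =>
    intro gaps A B hlen heq
    match gaps, hlen with
    | g :: gs, hlen =>
      simp only [List.length_cons, Nat.add_right_cancel_iff] at hlen
      simp only [interleave] at heq
      rcases List.append_eq_append_iff.mp heq.symm with ⟨t, hg, hB⟩ | ⟨c, hA, hc⟩
      ·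
        refine ⟨(A ++ ins ++ t) :: gs, by simp, ?_, ?_⟩
        · simp only [interleave, hB]
          simp [hg]
        · refine List.Forall₂.cons ?_ ?_
          · right; simp [hg, List.length_append]; ring
          · exact List.forall₂_same.mpr (fun x _ => Or.inl rfl)
      · -- A = g ++ c, c ++ B = a :: interleave gs as
        cases c with
        | nil =>
          simp at hc hA
          refine ⟨(A ++ ins) :: gs, by simp, ?_, ?_⟩
          · simp [interleave, hA, hc]
          · refine List.Forall₂.cons ?_ (List.forall₂_same.mpr (fun x _ => Or.inl rfl))
            right; simp [hA]
        | cons c0 c' =>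
          obtain ⟨hc0, hrest⟩ : c0 = a ∧ interleave gs as = c' ++ B := by
            have := hc.symm
            simp only [List.cons_append, List.cons.injEq] at this
            exact ⟨this.1, this.2.symm⟩
          obtain ⟨gs', hgl, hgi, hf⟩ := ih gs c' B hlen hrest
          refine ⟨g :: gs', by simp [hgl], ?_, ?_⟩
          · simp only [interleave, hgi, hA, hc0]; simp
          · exact List.Forall₂.cons (Or.inl rfl) hf

lemma step_preserves {q : ℕ} (bar : ZMod q → ZMod q) (k : ℕ) (x y y' : List (ZMod q))
    (hps : ProperlySpaced k x y) (h : RCStep bar k y y') : ProperlySpaced k x y' := by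
  obtain ⟨u, v, w, hv, hy, hy'⟩ := h
  obtain ⟨hx, gaps, hgl, hyi, hpar⟩ := hps
  have heq : interleave gaps x = (u ++ v) ++ w := by
    rw [← hyi, hy]
  obtain ⟨gaps', hgl', hgi, hf⟩ :=
    insert_interleave ((v.map bar).reverse) x gaps (u ++ v) w (by rw [hgl, hx]) heq
  refine ⟨hx, gaps', by rw [hgl', hgl], ?_, ?_⟩
  · rw [hgi, hy']
  · intro hke g' hg'
    -- tail membership
    have hins : ((v.map bar).reverse).length % 2 = 0 := by
      simp [hv, hke]
    match gaps, gaps', hf, hgl with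
    | g0 :: gt, g0' :: gt', List.Forall₂.cons _ hft, _ =>
      simp only [List.tail_cons] at hg' ⊢
      obtain ⟨g, hg, hr⟩ := forall2_mem hft g' hg'
      have hgpar := hpar hke g hg
      rcases hr with hr | hr
      · rw [hr]; exact hgpar
      · rw [hr, Nat.add_mod, hgpar, hins]

/-- Proper spacing persists under length-`k` reverse-complement duplications. -/
theorem stmt9 {q : ℕ} (bar : ZMod q → ZMod q) (hinv : Function.Involutive bar)
    (hfp : ∀ a, bar a ≠ a) (k : ℕ) (hk : 2 ≤ k) (x y y' : List (ZMod q))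
    (hps : ProperlySpaced k x y) (h : RCDerives bar k y y') :
    ProperlySpaced k x y' := by
  induction h with
  | refl => exact hps
  | tail _ hstep ih => exact step_preserves bar k x _ _ ih hstep
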